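/- Consider a solution of the Wainwright–Hsu system of Bianchi type VIII or IX on (-∞, 0]. If the point x = (n₁, n₂, n₃, s₊, s₋) is an α-limit point of the solution (i.e., there is a sequence τ_k → −∞ with the solution at τ_k converging to x), then n₁n₂n₃ = 0. -/

import Mathlib

open Filter

open Set Topology

/-- Lower barrier lemma: if `f' > 0` whenever `f ≤ θ`, and `f a ≥ θ`, then `f ≥ θ` on `[a,b]`. -/
lemma wh_barrier {f f' : ℝ → ℝ} {a b θ : ℝ}
    (hd : ∀ τ ∈ Icc a b, HasDerivAt f (f' τ) τ)
    (hpos : ∀ τ ∈ Icc a b, f τ ≤ θ → 0 < f' τ)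
    (ha : θ ≤ f a) : ∀ τ ∈ Icc a b, θ ≤ f τ := by
  by_contra hcon
  push_neg at hcon
  obtain ⟨τs, hτs, hlt⟩ := hcon
  have hcont : ContinuousOn f (Icc a τs) := fun σ hσ =>
    ((hd σ ⟨hσ.1, hσ.2.trans hτs.2⟩).continuousAt).continuousWithinAt
  have haτs : a ≤ τs := hτs.1
  set S : Set ℝ := Icc a τs ∩ f ⁻¹' (Ici θ) with hS
  have hSclosed : IsClosed S := hcont.preimage_isClosed_of_isClosed isClosed_Icc isClosed_Ici
  have hSne : S.Nonempty := ⟨a, ⟨le_refl a, haτs⟩, ha⟩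
  have hSbdd : BddAbove S := ⟨τs, fun σ hσ => hσ.1.2⟩
  set T := sSup S with hT
  have hTS : T ∈ S := hSclosed.csSup_mem hSne hSbdd
  have hfT : θ ≤ f T := hTS.2
  have hTlt : T < τs := lt_of_le_of_ne hTS.1.2
    (fun h => absurd (h ▸ hfT) (not_le.mpr hlt))
  -- on (T, τs], f < θ
  have hbelow : ∀ σ, T < σ → σ ≤ τs → f σ < θ := by
    intro σ h1 h2
    by_contra hge
    push_neg at hge
    have : σ ∈ S := ⟨⟨hTS.1.1.trans h1.le, h2⟩, hge⟩
    exact absurd (le_csSup hSbdd this) (not_le.mpr h1)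
  -- f strictly monotone on [T, τs]
  have hsm : StrictMonoOn f (Icc T τs) := by
    apply strictMonoOn_of_deriv_pos (convex_Icc T τs)
    · exact hcont.mono (Icc_subset_Icc hTS.1.1 le_rfl)
    · intro σ hσ
      rw [interior_Icc] at hσ
      have hσab : σ ∈ Icc a b := ⟨hTS.1.1.trans hσ.1.le, (hσ.2.le.trans hτs.2)⟩
      rw [(hd σ hσab).deriv]
      exact hpos σ hσab (hbelow σ hσ.1 hσ.2.le).le
  have := hsm (left_mem_Icc.mpr hTlt.le) (right_mem_Icc.mpr hTlt.le) hTlt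
  linarith

/-- Stay-in-ball: a solution starting within `ρ/2` of `x` with speed `≤ C`
(valid while within `ρ`) stays within `ρ` on a window of length `≤ ρ/(4C)`. -/
lemma wh_stay {E : Type*} [NormedAddCommGroup E] [NormedSpace ℝ E]
    {u : ℝ → E} {F : ℝ → E} {x : E} {ρ C a b : ℝ}
    (hρ : 0 < ρ) (hab : a ≤ b)
    (hd : ∀ τ ∈ Icc a b, HasDerivAt u (F τ) τ)
    (hb : ∀ τ ∈ Icc a b, ‖u τ - x‖ ≤ ρ → ‖F τ‖ ≤ C)
    (h0 : ‖u a - x‖ ≤ ρ / 2)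
    (hδ : C * (b - a) ≤ ρ / 4) :
    ∀ τ ∈ Icc a b, ‖u τ - x‖ ≤ ρ := by
  by_contra hcon
  push_neg at hcon
  obtain ⟨τs, hτs, hlt⟩ := hcon
  have hcont : ContinuousOn (fun σ => ‖u σ - x‖) (Icc a b) := fun σ hσ =>
    (((hd σ hσ).continuousAt.sub continuousAt_const).norm).continuousWithinAt
  set B : Set ℝ := Icc a τs ∩ (fun σ => ‖u σ - x‖) ⁻¹' (Ici ρ) with hB
  have hIccsub : Icc a τs ⊆ Icc a b := Icc_subset_Icc le_rfl hτs.2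
  have hBclosed : IsClosed B :=
    (hcont.mono hIccsub).preimage_isClosed_of_isClosed isClosed_Icc isClosed_Ici
  have hBne : B.Nonempty := ⟨τs, ⟨hτs.1, le_rfl⟩, hlt.le⟩
  have hBbdd : BddBelow B := ⟨a, fun σ hσ => hσ.1.1⟩
  set T := sInf B with hTdef
  have hTB : T ∈ B := hBclosed.csInf_mem hBne hBbdd
  have hTmem : T ∈ Icc a b := hIccsub hTB.1
  have hρT : ρ ≤ ‖u T - x‖ := hTB.2
  have haT : a < T := by
    rcases eq_or_lt_of_le hTB.1.1 with h | h
    · exfalso; rw [← h] at hρT; linarith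
    · exact h
  -- below T, norm < ρ
  have hbelow : ∀ σ, a ≤ σ → σ < T → ‖u σ - x‖ < ρ := by
    intro σ h1 h2
    by_contra hge
    push_neg at hge
    have hσB : σ ∈ B := ⟨⟨h1, h2.le.trans hTB.1.2⟩, hge⟩
    exact absurd (csInf_le hBbdd hσB) (not_le.mpr h2)
  -- norm ≤ ρ on [a, T]
  have hle : ∀ σ ∈ Icc a T, ‖u σ - x‖ ≤ ρ := by
    intro σ hσ
    rcases lt_or_eq_of_le hσ.2 with h | h
    · exact (hbelow σ hσ.1 h).le
    · rw [h]
      have hne : (𝓝[<] T).NeBot := inferInstance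
      have hten : Tendsto (fun σ' => ‖u σ' - x‖) (𝓝[<] T) (𝓝 ‖u T - x‖) :=
        ((((hd T hTmem).continuousAt.sub continuousAt_const).norm).tendsto).mono_left
          nhdsWithin_le_nhds
      have hev : ∀ᶠ σ' in 𝓝[<] T, ‖u σ' - x‖ ≤ ρ := by
        filter_upwards [Ioo_mem_nhdsLT_of_mem (⟨haT, le_rfl⟩ : T ∈ Ioc a T)] with σ' hσ'
        exact (hbelow σ' hσ'.1.le hσ'.2).le
      exact le_of_tendsto hten hev
  -- MVT on [a, T]
  have hmvt : ‖u T - u a‖ ≤ C * ‖T - a‖ := by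
    apply Convex.norm_image_sub_le_of_norm_hasDerivWithin_le
      (fun σ hσ => ((hd σ (hIccsub (Icc_subset_Icc le_rfl hTB.1.2 hσ))).hasDerivWithinAt))
      (fun σ hσ => hb σ (hIccsub (Icc_subset_Icc le_rfl hTB.1.2 hσ)) (hle σ hσ))
      (convex_Icc a T) (left_mem_Icc.mpr haT.le) (right_mem_Icc.mpr haT.le)
  have hC : 0 ≤ C := by
    have := hb a (left_mem_Icc.mpr hab) (by linarith)
    exact le_trans (norm_nonneg _) this
  have h1 : ‖T - a‖ = T - a := by rw [Real.norm_eq_abs, abs_of_nonneg (by linarith)]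
  have h2 : C * (T - a) ≤ ρ / 4 := by
    have := mul_le_mul_of_nonneg_left (show T - a ≤ b - a by have := hTmem.2; linarith) hC
    linarith
  have htri : ‖u T - x‖ ≤ ‖u T - u a‖ + ‖u a - x‖ := by
    have : u T - x = (u T - u a) + (u a - x) := by abel
    rw [this]; exact norm_add_le _ _
  rw [h1] at hmvt
  linarith

lemma wh_sqrt3_le : Real.sqrt 3 ≤ 2 := by
  nlinarith [Real.sq_sqrt (by norm_num : (0:ℝ) ≤ 3), Real.sqrt_nonneg 3]

lemma wh_abs_mul_le {a b A B : ℝ} (ha : |a| ≤ A) (hb : |b| ≤ B) : |a*b| ≤ A*B := by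
  rw [abs_mul]
  exact mul_le_mul ha hb (abs_nonneg b) ((abs_nonneg a).trans ha)

lemma wh_comp_le (p x : ℝ × ℝ × ℝ × ℝ × ℝ) :
    |p.1 - x.1| ≤ ‖p - x‖ ∧ |p.2.1 - x.2.1| ≤ ‖p - x‖ ∧ |p.2.2.1 - x.2.2.1| ≤ ‖p - x‖ ∧
      |p.2.2.2.1 - x.2.2.2.1| ≤ ‖p - x‖ ∧ |p.2.2.2.2 - x.2.2.2.2| ≤ ‖p - x‖ := by
  have h1 := norm_fst_le (p - x)
  have h2 := norm_snd_le (p - x)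
  have h21 := norm_fst_le (p.2 - x.2)
  have h22 := norm_snd_le (p.2 - x.2)
  have h221 := norm_fst_le (p.2.2 - x.2.2)
  have h222 := norm_snd_le (p.2.2 - x.2.2)
  have h2221 := norm_fst_le (p.2.2.2 - x.2.2.2)
  have h2222 := norm_snd_le (p.2.2.2 - x.2.2.2)
  simp only [Prod.fst_sub, Prod.snd_sub, Real.norm_eq_abs] at *
  refine ⟨h1, ?_, ?_, ?_, ?_⟩
  · exact h21.trans h2
  · exact (h221.trans h22).trans h2
  · exact ((h2221.trans h222).trans h22).trans h2
  · exact ((h2222.trans h222).trans h22).trans h2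

lemma wh_norm_le {d1 d2 d3 d4 d5 C : ℝ} (h1 : |d1| ≤ C) (h2 : |d2| ≤ C) (h3 : |d3| ≤ C)
    (h4 : |d4| ≤ C) (h5 : |d5| ≤ C) : ‖((d1, d2, d3, d4, d5) : ℝ × ℝ × ℝ × ℝ × ℝ)‖ ≤ C := by
  simp only [Prod.norm_def, Real.norm_eq_abs, sup_le_iff]
  exact ⟨h1, h2, h3, h4, h5⟩

lemma wh_sign {P : ℝ → ℝ} (hc : ∀ τ ≤ (0:ℝ), ContinuousAt P τ)
    (hne : ∀ τ ≤ (0:ℝ), P τ ≠ 0) (h0 : 0 < P 0) : ∀ τ ≤ (0:ℝ), 0 < P τ := by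
  intro σ hσ
  by_contra hle
  push_neg at hle
  have hcont : ContinuousOn P (Icc σ 0) := fun τ hτ => (hc τ hτ.2).continuousWithinAt
  obtain ⟨τ, hτ, hτ0⟩ := intermediate_value_Icc hσ hcont ⟨hle, h0.le⟩
  exact hne τ hτ.2 hτ0

/-- Case-B algebra: vanishing shears plus vanishing curvature terms contradict the constraint. -/
lemma wh_alg {a1 a2 a3 : ℝ}
    (hcon : (3/4)*(a1^2+a2^2+a3^2 - 2*(a1*a2+a2*a3+a3*a1)) = 1)
    (h1 : (a2-a3)^2 - a1*(2*a1-a2-a3) = 0)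
    (h2 : (a3-a2)*(a1-a2-a3) = 0) : False := by
  rcases mul_eq_zero.mp h2 with h | h
  · have ha : a3 = a2 := by linarith [sub_eq_zero.mp h]
    subst ha
    have h1' : a1 * (a1 - a3) = 0 := by nlinarith
    rcases mul_eq_zero.mp h1' with h' | h'
    · subst h'; nlinarith
    · have : a1 = a3 := by linarith
      subst this; nlinarith
  · have ha : a1 = a2 + a3 := by linarith [sub_eq_zero.mp h]
    subst ha
    have h1' : a2 * a3 = 0 := by nlinarith
    rcases mul_eq_zero.mp h1' with h' | h' <;> (subst h'; nlinarith)

/-- Case-B core: if the torque `E` is bounded below by `m` and `W` starts small,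
then `W` grows linearly, making `q ≥ 2W²` definitely positive on the second half window. -/
lemma wh_caseB {q W E : ℝ → ℝ} {a δ m : ℝ} (hm : 0 < m) (hδ : 0 < δ) (hδ2 : δ ≤ 1/2)
    (hd : ∀ τ ∈ Icc a (a+δ), HasDerivAt W (-(2 - q τ) * W τ + E τ) τ)
    (hq1 : ∀ τ ∈ Icc a (a+δ), q τ ≤ 1)
    (hE : ∀ τ ∈ Icc a (a+δ), m ≤ E τ)
    (hqW : ∀ τ ∈ Icc a (a+δ), 2 * W τ^2 ≤ q τ)
    (hWa : |W a| ≤ m*δ/16) :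
    ∀ τ ∈ Icc (a + δ/2) (a+δ), 2*(m*δ/16)^2 ≤ q τ := by
  obtain ⟨hWa1, hWa2⟩ := abs_le.mp hWa
  -- Step 1: W stays above -m/4
  have hs1 : ∀ τ ∈ Icc a (a+δ), -(m/4) ≤ W τ := by
    apply wh_barrier hd
    · intro τ hτ hWτ
      have hq1' := hq1 τ hτ
      have hqW' := hqW τ hτ
      have hq0 : 0 ≤ q τ := le_trans (by positivity) hqW'
      have hE' := hE τ hτ
      nlinarith [mul_nonneg (by linarith : (0:ℝ) ≤ 2 - q τ) (by linarith : 0 ≤ -(m/4) - W τ)]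
    · nlinarith
  -- Step 2: W τ - (m/4)(τ - a) stays above -(mδ/16)
  have hs2 : ∀ τ ∈ Icc a (a+δ), -(m*δ/16) ≤ W τ - m/4*(τ - a) := by
    apply wh_barrier (f' := fun τ => (-(2 - q τ) * W τ + E τ) - m/4)
    · intro τ hτ
      exact (hd τ hτ).sub (by simpa using ((hasDerivAt_id τ).sub_const a).const_mul (m/4))
    · intro τ hτ hg
      have hq1' := hq1 τ hτ
      have hqW' := hqW τ hτ
      have hq0 : 0 ≤ q τ := le_trans (by positivity) hqW'
      have hE' := hE τ hτ
      have hW1 := hs1 τ hτ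
      have hτa : τ - a ≤ δ := by have := hτ.2; linarith
      have hWub : W τ ≤ m/8 := by nlinarith
      nlinarith [mul_nonneg (by linarith : (0:ℝ) ≤ 2 - q τ) (by linarith : 0 ≤ m/8 - W τ)]
    · simp only [sub_self, mul_zero]; nlinarith
  intro τ hτ
  have hτ' : τ ∈ Icc a (a+δ) := ⟨by have := hτ.1; linarith, hτ.2⟩
  have h2 := hs2 τ hτ'
  have hτlb : δ/2 ≤ τ - a := by have := hτ.1; linarith
  have hWlb : m*δ/16 ≤ W τ := by nlinarith
  have := hqW τ hτ'
  nlinarith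

/-- Sign-dispatching wrapper around `wh_caseB`. -/
lemma wh_caseB' {q V G : ℝ → ℝ} {a δ Sx : ℝ} (hSx : Sx ≠ 0) (hδ : 0 < δ) (hδ2 : δ ≤ 1/2)
    (hd : ∀ τ ∈ Icc a (a+δ), HasDerivAt V (-(2 - q τ) * V τ - 3 * G τ) τ)
    (hq1 : ∀ τ ∈ Icc a (a+δ), q τ ≤ 1)
    (hG : ∀ τ ∈ Icc a (a+δ), |G τ - Sx| ≤ |Sx|/2)
    (hqW : ∀ τ ∈ Icc a (a+δ), 2 * V τ^2 ≤ q τ)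
    (hVa : |V a| ≤ (3/2) * |Sx| * δ/16) :
    ∀ τ ∈ Icc (a + δ/2) (a+δ), 2*((3/2) * |Sx| * δ/16)^2 ≤ q τ := by
  have hm : 0 < (3/2) * |Sx| := by
    have := abs_pos.mpr hSx; linarith
  rcases hSx.lt_or_gt with hneg | hpos
  · have habs : |Sx| = -Sx := abs_of_neg hneg
    apply wh_caseB (E := fun τ => -3 * G τ) hm hδ hδ2 _ hq1 _ hqW hVa
    · intro τ hτ
      have := hd τ hτ
      convert this using 1; ring
    · intro τ hτ
      have h := hG τ hτ
      rw [abs_le] at h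
      rw [habs] at h ⊢
      linarith
  · have habs : |Sx| = Sx := abs_of_pos hpos
    have hres := wh_caseB (q := q) (W := fun τ => -V τ) (E := fun τ => 3 * G τ)
      (a := a) (δ := δ) hm hδ hδ2 ?_ hq1 ?_ ?_ ?_
    · exact hres
    · intro τ hτ
      have := (hd τ hτ).fun_neg
      exact this.congr_deriv (by ring)
    · intro τ hτ
      have h := hG τ hτ
      rw [abs_le] at h
      rw [habs] at h ⊢
      linarith
    · intro τ hτ
      have h := hqW τ hτ
      have : (-V τ)^2 = V τ ^2 := by ring
      rw [this]
      exact h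
    · rw [abs_neg]; exact hVa

lemma wh_mono {q h : ℝ → ℝ}
    (hq0 : ∀ τ ≤ (0:ℝ), 0 ≤ q τ)
    (hd : ∀ τ ≤ (0:ℝ), HasDerivAt h (3 * q τ * h τ) τ)
    (hpos : ∀ τ ≤ (0:ℝ), 0 < h τ) : MonotoneOn h (Iic 0) := by
  apply monotoneOn_of_deriv_nonneg (convex_Iic 0)
  · exact fun σ hσ => (hd σ hσ).continuousAt.continuousWithinAt
  · intro σ hσ
    rw [interior_Iic] at hσ
    exact ((hd σ hσ.le).differentiableAt).differentiableWithinAt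
  · intro σ hσ
    rw [interior_Iic] at hσ
    rw [(hd σ hσ.le).deriv]
    have := hq0 σ hσ.le
    have := hpos σ hσ.le
    positivity


lemma wh_assembly {q h : ℝ → ℝ} {L δ c : ℝ} (G : ℝ → Prop)
    (hq0 : ∀ τ ≤ (0:ℝ), 0 ≤ q τ)
    (hd : ∀ τ ≤ (0:ℝ), HasDerivAt h (3 * q τ * h τ) τ)
    (hpos : ∀ τ ≤ (0:ℝ), 0 < h τ)
    (hL : 0 < L) (hLle : ∀ τ ≤ (0:ℝ), L ≤ h τ)
    (hδ : 0 < δ) (hc : 0 < c)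
    (hG : ∀ b : ℝ, ∃ τ0, τ0 ≤ b ∧ G τ0)
    (hwin : ∀ τ0, τ0 + δ ≤ 0 → G τ0 →
      ∀ τ ∈ Icc (τ0 + δ/2) (τ0 + δ), c ≤ q τ) : False := by
  have hmono : MonotoneOn h (Iic 0) := wh_mono hq0 hd hpos
  set ε := 3 * c * L * (δ/2) with hε
  have hεpos : 0 < ε := by positivity
  have hinc : ∀ τ0, τ0 + δ ≤ 0 → G τ0 → h τ0 + ε ≤ h (τ0 + δ) := by
    intro τ0 h0 hGτ0
    have hq := hwin τ0 h0 hGτ0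
    set a2 := τ0 + δ/2 with ha2
    set b2 := τ0 + δ with hb2
    have hab2 : a2 ≤ b2 := by rw [ha2, hb2]; linarith
    have hφ : MonotoneOn (fun τ => h τ - 3*c*L*τ) (Icc a2 b2) := by
      apply monotoneOn_of_deriv_nonneg (convex_Icc a2 b2)
      · apply ContinuousOn.sub
        · exact fun σ hσ => (hd σ (by have := hσ.2; rw [hb2] at this; linarith)).continuousAt.continuousWithinAt
        · fun_prop
      · intro σ hσ
        rw [interior_Icc] at hσ
        have hσ0 : σ ≤ 0 := by have := hσ.2; rw [hb2] at this; linarith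
        exact (((hd σ hσ0).sub (by simpa using (hasDerivAt_id σ).const_mul (3*c*L))).differentiableAt).differentiableWithinAt
      · intro σ hσ
        rw [interior_Icc] at hσ
        have hσ0 : σ ≤ 0 := by have := hσ.2; rw [hb2] at this; linarith
        have hder : HasDerivAt (fun τ => h τ - 3*c*L*τ) (3 * q σ * h σ - 3*c*L) σ := by
          have := (hasDerivAt_id σ).const_mul (3*c*L)
          simp only [id, mul_one] at this
          exact (hd σ hσ0).sub this
        rw [hder.deriv]
        have h1 : c ≤ q σ := hq σ ⟨hσ.1.le, hσ.2.le⟩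
        have h2 : L ≤ h σ := hLle σ hσ0
        nlinarith
    have hstep := hφ (left_mem_Icc.mpr hab2) (right_mem_Icc.mpr hab2) hab2
    simp only at hstep
    have hm : h τ0 ≤ h a2 := hmono (show τ0 ∈ Iic 0 by simp only [mem_Iic]; linarith)
      (show a2 ∈ Iic 0 by simp only [mem_Iic]; rw [ha2]; linarith) (by rw [ha2]; linarith)
    rw [ha2, hb2] at *
    have : h (τ0 + δ/2) - 3*c*L*(τ0 + δ/2) ≤ h (τ0 + δ) - 3*c*L*(τ0 + δ) := hstep
    rw [hε]; linarith
  -- construct the sequence of windows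
  choose f hf1 hf2 using hG
  set τ : ℕ → ℝ := fun n => Nat.rec (f (-δ)) (fun _ ih => f (ih - δ - 1)) n with hτ
  have hτ0 : τ 0 = f (-δ) := rfl
  have hτs : ∀ n, τ (n+1) = f (τ n - δ - 1) := fun n => rfl
  have hτle : ∀ n, τ n ≤ -δ := by
    intro n; induction n with
    | zero => rw [hτ0]; exact hf1 _
    | succ n ih =>
      rw [hτs n]
      have := hf1 (τ n - δ - 1)
      linarith
  have hτG : ∀ n, G (τ n) := by
    intro n; cases n with
    | zero => exact hf2 _
    | succ n => exact hf2 _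
  have hkey : ∀ n, h (τ (n+1)) + ε ≤ h (τ n) := by
    intro n
    have h1 : τ (n+1) ≤ τ n - δ - 1 := by rw [hτs n]; exact hf1 _
    have h2 : τ (n+1) + δ ≤ 0 := by have := hτle (n+1); linarith
    have h3 := hinc (τ (n+1)) h2 (hτG (n+1))
    have h4 : h (τ (n+1) + δ) ≤ h (τ n) := by
      apply hmono
      · simp only [mem_Iic]; linarith
      · simp only [mem_Iic]; have := hτle n; linarith
      · linarith
    linarith
  have hlow : ∀ n, h (τ n) + n * ε ≤ h (τ 0) := by
    intro n; induction n with
    | zero => simp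
    | succ n ih =>
      have := hkey n
      push_cast
      push_cast at ih
      linarith
  obtain ⟨n, hn⟩ := exists_nat_gt ((h (τ 0) - L) / ε)
  have h1 : L ≤ h (τ n) := hLle _ (by have := hτle n; linarith)
  have h2 := hlow n
  have : (h (τ 0) - L) / ε < n := hn
  rw [div_lt_iff₀ hεpos] at this
  linarith

lemma wh_Rbound {R : ℝ} (hR : 1 ≤ R) :
    (4*R^2 + 4*R) * R ≤ 100*R^3 ∧ (4*R^2 + 6*R) * R ≤ 100*R^3 ∧
    (2 + 4*R^2) * R + 3*(4*R^2) ≤ 100*R^3 ∧ (2 + 4*R^2) * R + 3*(6*R^2) ≤ 100*R^3 := by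
  have h0 : (0:ℝ) ≤ R := by linarith
  have hRa : R ≤ R^2 := by nlinarith
  have hRb : R^2 ≤ R^3 := by nlinarith
  have hRc : R ≤ R^3 := by linarith
  refine ⟨by nlinarith, by nlinarith, by nlinarith, by nlinarith⟩

noncomputable def qq (Sp Sm : ℝ → ℝ) (τ : ℝ) : ℝ := 2 * (Sp τ ^ 2 + Sm τ ^ 2)

noncomputable def Spl (N1 N2 N3 : ℝ → ℝ) (τ : ℝ) : ℝ :=
  (1 / 2) * ((N2 τ - N3 τ) ^ 2 - N1 τ * (2 * N1 τ - N2 τ - N3 τ))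

noncomputable def Smi (N1 N2 N3 : ℝ → ℝ) (τ : ℝ) : ℝ :=
  (Real.sqrt 3 / 2) * ((N3 τ - N2 τ) * (N1 τ - N2 τ - N3 τ))

/-- The Wainwright–Hsu vacuum constraint. -/
def Constraint (N1 N2 N3 Sp Sm : ℝ → ℝ) (τ : ℝ) : Prop :=
  Sp τ ^ 2 + Sm τ ^ 2 +
      (3 / 4) * (N1 τ ^ 2 + N2 τ ^ 2 + N3 τ ^ 2 -
        2 * (N1 τ * N2 τ + N2 τ * N3 τ + N3 τ * N1 τ)) = 1

/-- `(N1, N2, N3, Sp, Sm)` solves the Wainwright–Hsu system (with constraint) on `S`. -/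
def IsWHSolutionOn (N1 N2 N3 Sp Sm : ℝ → ℝ) (S : Set ℝ) : Prop :=
  ∀ τ ∈ S,
    HasDerivAt N1 ((qq Sp Sm τ - 4 * Sp τ) * N1 τ) τ ∧
    HasDerivAt N2 ((qq Sp Sm τ + 2 * Sp τ + 2 * Real.sqrt 3 * Sm τ) * N2 τ) τ ∧
    HasDerivAt N3 ((qq Sp Sm τ + 2 * Sp τ - 2 * Real.sqrt 3 * Sm τ) * N3 τ) τ ∧
    HasDerivAt Sp (-(2 - qq Sp Sm τ) * Sp τ - 3 * Spl N1 N2 N3 τ) τ ∧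
    HasDerivAt Sm (-(2 - qq Sp Sm τ) * Sm τ - 3 * Smi N1 N2 N3 τ) τ ∧
    Constraint N1 N2 N3 Sp Sm τ

set_option maxHeartbeats 1000000 in
/-- Any α-limit point of a Bianchi VIII or IX Wainwright–Hsu solution (all `Nᵢ`
nonvanishing) has `n₁n₂n₃ = 0`. -/
theorem stmt_10 (N1 N2 N3 Sp Sm : ℝ → ℝ)
    (hsol : IsWHSolutionOn N1 N2 N3 Sp Sm (Set.Iic 0))
    (htype : ∀ τ ≤ (0 : ℝ), N1 τ ≠ 0 ∧ N2 τ ≠ 0 ∧ N3 τ ≠ 0)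
    (n1 n2 n3 s1 s2 : ℝ)
    (hlimit : ∃ t : ℕ → ℝ, (∀ k, t k ≤ 0) ∧ Tendsto t atTop atBot ∧
      Tendsto (fun k => (N1 (t k), N2 (t k), N3 (t k), Sp (t k), Sm (t k)))
        atTop (nhds (n1, n2, n3, s1, s2))) :
    n1 * n2 * n3 = 0 := by
  by_contra hprod
  obtain ⟨t, ht0, htb, htc⟩ := hlimit
  have hq0 : ∀ τ : ℝ, 0 ≤ qq Sp Sm τ := fun τ => by unfold qq; positivity
  set x : ℝ × ℝ × ℝ × ℝ × ℝ := (n1, n2, n3, s1, s2) with hxdef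
  set u : ℝ → ℝ × ℝ × ℝ × ℝ × ℝ := fun τ => (N1 τ, N2 τ, N3 τ, Sp τ, Sm τ) with hudef
  have htc' : Tendsto (fun k => u (t k)) atTop (𝓝 x) := htc
  -- componentwise limits
  have hT1 : Tendsto (fun k => N1 (t k)) atTop (𝓝 n1) :=
    (continuous_fst.tendsto x).comp htc'
  have hT2 : Tendsto (fun k => N2 (t k)) atTop (𝓝 n2) :=
    ((continuous_fst.comp continuous_snd).tendsto x).comp htc'
  have hT3 : Tendsto (fun k => N3 (t k)) atTop (𝓝 n3) :=
    ((continuous_fst.comp (continuous_snd.comp continuous_snd)).tendsto x).comp htc'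
  have hT4 : Tendsto (fun k => Sp (t k)) atTop (𝓝 s1) :=
    ((continuous_fst.comp (continuous_snd.comp (continuous_snd.comp continuous_snd))).tendsto x).comp htc'
  have hT5 : Tendsto (fun k => Sm (t k)) atTop (𝓝 s2) :=
    ((continuous_snd.comp (continuous_snd.comp (continuous_snd.comp continuous_snd))).tendsto x).comp htc'
  -- the constraint holds at the limit point
  have hcx : s1^2 + s2^2 + (3/4)*(n1^2+n2^2+n3^2 - 2*(n1*n2+n2*n3+n3*n1)) = 1 := by
    have hC : Tendsto (fun k => Sp (t k)^2 + Sm (t k)^2 +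
        (3/4)*(N1 (t k)^2 + N2 (t k)^2 + N3 (t k)^2 -
          2*(N1 (t k)*N2 (t k) + N2 (t k)*N3 (t k) + N3 (t k)*N1 (t k)))) atTop
        (𝓝 (s1^2 + s2^2 + (3/4)*(n1^2+n2^2+n3^2 - 2*(n1*n2+n2*n3+n3*n1)))) := by
      exact ((hT4.pow 2).add (hT5.pow 2)).add (tendsto_const_nhds.mul
        ((((hT1.pow 2).add (hT2.pow 2)).add (hT3.pow 2)).sub (tendsto_const_nhds.mul
          (((hT1.mul hT2).add (hT2.mul hT3)).add (hT3.mul hT1)))))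
    have hC1 : ∀ k : ℕ, Sp (t k)^2 + Sm (t k)^2 +
        (3/4)*(N1 (t k)^2 + N2 (t k)^2 + N3 (t k)^2 -
          2*(N1 (t k)*N2 (t k) + N2 (t k)*N3 (t k) + N3 (t k)*N1 (t k))) = 1 :=
      fun k => (hsol (t k) (ht0 k)).2.2.2.2.2
    exact tendsto_nhds_unique ((tendsto_congr hC1).mp hC) tendsto_const_nhds
  -- the product and its sign-normalized version
  set P : ℝ → ℝ := fun τ => N1 τ * N2 τ * N3 τ with hPdef
  have hPd : ∀ τ ≤ (0:ℝ), HasDerivAt P (3 * qq Sp Sm τ * P τ) τ := by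
    intro τ hτ
    obtain ⟨h1, h2, h3, _, _, _⟩ := hsol τ hτ
    have := (h1.fun_mul h2).fun_mul h3
    exact this.congr_deriv (by simp only [hPdef]; ring)
  have hPne : ∀ τ ≤ (0:ℝ), P τ ≠ 0 := fun τ hτ => by
    obtain ⟨a, b, c⟩ := htype τ hτ
    exact mul_ne_zero (mul_ne_zero a b) c
  have hPlim : Tendsto (fun k => P (t k)) atTop (𝓝 (n1*n2*n3)) := (hT1.mul hT2).mul hT3
  have hPc : ∀ τ ≤ (0:ℝ), ContinuousAt P τ := fun τ hτ => (hPd τ hτ).continuousAt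
  obtain ⟨h, L, hhd, hhpos, hLpos, hhlim⟩ :
      ∃ (h : ℝ → ℝ) (L : ℝ), (∀ τ ≤ (0:ℝ), HasDerivAt h (3 * qq Sp Sm τ * h τ) τ) ∧
        (∀ τ ≤ (0:ℝ), 0 < h τ) ∧ 0 < L ∧ Tendsto (fun k => h (t k)) atTop (𝓝 L) := by
    rcases (hPne 0 le_rfl).lt_or_gt with hneg | hpos
    · refine ⟨fun τ => -P τ, -(n1*n2*n3), fun τ hτ => ?_, ?_, ?_, hPlim.neg⟩
      · have := (hPd τ hτ).fun_neg
        exact this.congr_deriv (by ring)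
      · exact wh_sign (fun τ hτ => (hPc τ hτ).neg)
          (fun τ hτ => neg_ne_zero.mpr (hPne τ hτ)) (by simpa using hneg.le.lt_of_ne (hPne 0 le_rfl))
      · have hge : 0 ≤ -(n1*n2*n3) := by
          refine ge_of_tendsto hPlim.neg (Eventually.of_forall fun k => ?_)
          have := hPne (t k) (ht0 k)
          have hcont : ContinuousOn P (Icc (t k) 0) := fun σ hσ => (hPc σ hσ.2).continuousWithinAt
          by_contra hc
          push_neg at hc
          obtain ⟨τ', hτ', h0'⟩ := intermediate_value_Icc' (ht0 k) hcont
            ⟨hneg.le, by linarith⟩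
          exact hPne τ' hτ'.2 h0'
        exact lt_of_le_of_ne hge (fun hcon => hprod (by linarith [hcon]))
    · refine ⟨P, n1*n2*n3, hPd, wh_sign hPc hPne hpos, ?_, hPlim⟩
      have hppos := wh_sign hPc hPne hpos
      have hge : 0 ≤ n1*n2*n3 :=
        ge_of_tendsto hPlim (Eventually.of_forall fun k => (hppos (t k) (ht0 k)).le)
      exact lt_of_le_of_ne hge (Ne.symm hprod)
  have hmono : MonotoneOn h (Iic 0) := wh_mono (fun τ _ => hq0 τ) hhd hhpos
  have hLle : ∀ τ ≤ (0:ℝ), L ≤ h τ := by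
    intro τ hτ
    refine le_of_tendsto hhlim ?_
    filter_upwards [htb.eventually_le_atBot τ] with k hk
    exact hmono (mem_Iic.mpr (ht0 k)) (mem_Iic.mpr hτ) hk
  -- bounds on the vector field near x
  have hs3 : Real.sqrt 3 ≤ 2 := wh_sqrt3_le
  have hs3' : 0 ≤ Real.sqrt 3 := Real.sqrt_nonneg 3
  obtain ⟨R, hRdef⟩ : ∃ R : ℝ, R = |n1| + |n2| + |n3| + |s1| + |s2| + 1 := ⟨_, rfl⟩
  have hR1 : 1 ≤ R := by
    have := abs_nonneg n1; have := abs_nonneg n2; have := abs_nonneg n3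
    have := abs_nonneg s1; have := abs_nonneg s2
    rw [hRdef]; linarith
  obtain ⟨C, hCdef⟩ : ∃ C : ℝ, C = 100 * R^3 := ⟨_, rfl⟩
  have hR2 : 1 ≤ R^2 := by nlinarith
  have hR3 : 1 ≤ R^3 := by nlinarith
  obtain ⟨hB1, hB2, hB3, hB4⟩ := wh_Rbound hR1
  have hC100 : 100 ≤ C := by rw [hCdef]; linarith
  have hC0 : 0 < C := by linarith
  set F : ℝ → ℝ × ℝ × ℝ × ℝ × ℝ := fun τ =>
    ((qq Sp Sm τ - 4 * Sp τ) * N1 τ,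
     (qq Sp Sm τ + 2 * Sp τ + 2 * Real.sqrt 3 * Sm τ) * N2 τ,
     (qq Sp Sm τ + 2 * Sp τ - 2 * Real.sqrt 3 * Sm τ) * N3 τ,
     -(2 - qq Sp Sm τ) * Sp τ - 3 * Spl N1 N2 N3 τ,
     -(2 - qq Sp Sm τ) * Sm τ - 3 * Smi N1 N2 N3 τ) with hFdef
  have hud : ∀ τ ∈ Iic (0:ℝ), HasDerivAt u (F τ) τ := by
    intro τ hτ
    obtain ⟨h1, h2, h3, h4, h5, _⟩ := hsol τ hτ
    exact h1.prodMk (h2.prodMk (h3.prodMk (h4.prodMk h5)))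
  have hFb : ∀ τ ∈ Iic (0:ℝ), ‖u τ - x‖ ≤ 1 → ‖F τ‖ ≤ C := by
    intro τ hτ hn
    obtain ⟨e1, e2, e3, e4, e5⟩ := wh_comp_le (u τ) x
    simp only [hudef, hxdef] at e1 e2 e3 e4 e5
    have b1 : |N1 τ| ≤ R := by
      have := (abs_add_le (N1 τ - n1) n1).trans_eq' (by ring_nf : |N1 τ - n1 + n1| = |N1 τ|)
      have := abs_nonneg n2; have := abs_nonneg n3; have := abs_nonneg s1; have := abs_nonneg s2
      rw [hRdef]; linarith [e1.trans hn]
    have b2 : |N2 τ| ≤ R := by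
      have := (abs_add_le (N2 τ - n2) n2).trans_eq' (by ring_nf : |N2 τ - n2 + n2| = |N2 τ|)
      have := abs_nonneg n1; have := abs_nonneg n3; have := abs_nonneg s1; have := abs_nonneg s2
      rw [hRdef]; linarith [e2.trans hn]
    have b3 : |N3 τ| ≤ R := by
      have := (abs_add_le (N3 τ - n3) n3).trans_eq' (by ring_nf : |N3 τ - n3 + n3| = |N3 τ|)
      have := abs_nonneg n1; have := abs_nonneg n2; have := abs_nonneg s1; have := abs_nonneg s2
      rw [hRdef]; linarith [e3.trans hn]
    have b4 : |Sp τ| ≤ R := by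
      have := (abs_add_le (Sp τ - s1) s1).trans_eq' (by ring_nf : |Sp τ - s1 + s1| = |Sp τ|)
      have := abs_nonneg n1; have := abs_nonneg n2; have := abs_nonneg n3; have := abs_nonneg s2
      rw [hRdef]; linarith [e4.trans hn]
    have b5 : |Sm τ| ≤ R := by
      have := (abs_add_le (Sm τ - s2) s2).trans_eq' (by ring_nf : |Sm τ - s2 + s2| = |Sm τ|)
      have := abs_nonneg n1; have := abs_nonneg n2; have := abs_nonneg n3; have := abs_nonneg s1
      rw [hRdef]; linarith [e5.trans hn]
    obtain ⟨b4l, b4r⟩ := abs_le.mp b4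
    obtain ⟨b5l, b5r⟩ := abs_le.mp b5
    have hsp2sq : Sp τ^2 ≤ R^2 := sq_le_sq' b4l b4r
    have hsm2sq : Sm τ^2 ≤ R^2 := sq_le_sq' b5l b5r
    have hqub : qq Sp Sm τ ≤ 4 * R^2 := by
      unfold qq; linarith
    have hql := hq0 τ
    have hsp2 : |2 * Real.sqrt 3 * Sm τ| ≤ 4 * R :=
      (wh_abs_mul_le (show |2 * Real.sqrt 3| ≤ 4 by rw [abs_of_nonneg (by linarith)]; linarith) b5)
    obtain ⟨hsp2l, hsp2r⟩ := abs_le.mp hsp2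
    have hSplb : |Spl N1 N2 N3 τ| ≤ 4 * R^2 := by
      unfold Spl
      have h23 : |N2 τ - N3 τ| ≤ 2*R := (abs_sub _ _).trans (by linarith)
      have hsq : |(N2 τ - N3 τ)^2| ≤ 4*R^2 := by
        rw [sq]
        exact (wh_abs_mul_le h23 h23).trans_eq (by ring)
      have hlin : |2 * N1 τ - N2 τ - N3 τ| ≤ 4*R := by
        have := abs_le.mp b1; have := abs_le.mp b2; have := abs_le.mp b3
        rw [abs_le]; constructor <;> linarith [this.1, this.2]
      have hm : |N1 τ * (2 * N1 τ - N2 τ - N3 τ)| ≤ 4*R^2 :=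
        (wh_abs_mul_le b1 hlin).trans_eq (by ring)
      calc |1/2 * ((N2 τ - N3 τ)^2 - N1 τ * (2 * N1 τ - N2 τ - N3 τ))|
          ≤ 1/2 * (|(N2 τ - N3 τ)^2| + |N1 τ * (2 * N1 τ - N2 τ - N3 τ)|) := by
            rw [abs_mul, abs_of_nonneg (by norm_num : (0:ℝ) ≤ 1/2)]
            have := abs_sub ((N2 τ - N3 τ)^2) (N1 τ * (2 * N1 τ - N2 τ - N3 τ))
            linarith
        _ ≤ 4 * R^2 := by linarith only [hsq, hm]
    have hSmib : |Smi N1 N2 N3 τ| ≤ 6 * R^2 := by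
      unfold Smi
      have h32 : |N3 τ - N2 τ| ≤ 2*R := (abs_sub _ _).trans (by linarith)
      have hlin : |N1 τ - N2 τ - N3 τ| ≤ 3*R := by
        have := abs_le.mp b1; have := abs_le.mp b2; have := abs_le.mp b3
        rw [abs_le]; constructor <;> linarith [this.1, this.2]
      have := wh_abs_mul_le (show |Real.sqrt 3 / 2| ≤ 1 by
          rw [abs_of_nonneg (by linarith)]; linarith)
        (wh_abs_mul_le h32 hlin)
      calc |Real.sqrt 3 / 2 * ((N3 τ - N2 τ) * (N1 τ - N2 τ - N3 τ))|
          ≤ 1 * (2*R*(3*R)) := this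
        _ ≤ 6 * R^2 := le_of_eq (by ring)
    obtain ⟨hSpll, hSplr⟩ := abs_le.mp hSplb
    obtain ⟨hSmil, hSmir⟩ := abs_le.mp hSmib
    rw [hFdef]
    apply wh_norm_le
    · refine (wh_abs_mul_le (show |qq Sp Sm τ - 4 * Sp τ| ≤ 4*R^2 + 4*R from
        abs_le.mpr ⟨by linarith, by linarith⟩) b1).trans ?_
      rw [hCdef]; exact hB1
    · refine (wh_abs_mul_le (show |qq Sp Sm τ + 2 * Sp τ + 2 * Real.sqrt 3 * Sm τ| ≤ 4*R^2 + 6*R from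
        abs_le.mpr ⟨by linarith, by linarith⟩) b2).trans ?_
      rw [hCdef]; exact hB2
    · refine (wh_abs_mul_le (show |qq Sp Sm τ + 2 * Sp τ - 2 * Real.sqrt 3 * Sm τ| ≤ 4*R^2 + 6*R from
        abs_le.mpr ⟨by linarith, by linarith⟩) b3).trans ?_
      rw [hCdef]; exact hB2
    · have h1 : |(-(2 - qq Sp Sm τ)) * Sp τ| ≤ (2 + 4*R^2) * R := by
        refine wh_abs_mul_le (abs_le.mpr ⟨by linarith, by linarith⟩) b4
      have := abs_sub ((-(2 - qq Sp Sm τ)) * Sp τ) (3 * Spl N1 N2 N3 τ)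
      have h2 : |3 * Spl N1 N2 N3 τ| ≤ 3 * (4*R^2) := by
        rw [abs_mul, abs_of_nonneg (by norm_num : (0:ℝ) ≤ 3)]; linarith
      calc |(-(2 - qq Sp Sm τ)) * Sp τ - 3 * Spl N1 N2 N3 τ|
          ≤ (2 + 4*R^2) * R + 3 * (4*R^2) := by linarith
        _ ≤ C := by rw [hCdef]; exact hB3
    · have h1 : |(-(2 - qq Sp Sm τ)) * Sm τ| ≤ (2 + 4*R^2) * R := by
        refine wh_abs_mul_le (abs_le.mpr ⟨by linarith, by linarith⟩) b5
      have := abs_sub ((-(2 - qq Sp Sm τ)) * Sm τ) (3 * Smi N1 N2 N3 τ)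
      have h2 : |3 * Smi N1 N2 N3 τ| ≤ 3 * (6*R^2) := by
        rw [abs_mul, abs_of_nonneg (by norm_num : (0:ℝ) ≤ 3)]; linarith
      calc |(-(2 - qq Sp Sm τ)) * Sm τ - 3 * Smi N1 N2 N3 τ|
          ≤ (2 + 4*R^2) * R + 3 * (6*R^2) := by linarith
        _ ≤ C := by rw [hCdef]; exact hB4
  have hstay' : ∀ ρ δ : ℝ, 0 < ρ → ρ ≤ 1 → 0 < δ → C * δ ≤ ρ/4 →
      ∀ τ0, τ0 + δ ≤ 0 → ‖u τ0 - x‖ ≤ ρ/2 →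
      ∀ τ ∈ Icc τ0 (τ0 + δ), ‖u τ - x‖ ≤ ρ := by
    intro ρ δ hρ hρ1 hδpos hCδ τ0 hτ0 hstart
    refine wh_stay hρ (by linarith)
      (fun τ hτ => hud τ (mem_Iic.mpr (hτ.2.trans hτ0)))
      (fun τ hτ hn => hFb τ (mem_Iic.mpr (hτ.2.trans hτ0)) (hn.trans hρ1))
      hstart ?_
    have : τ0 + δ - τ0 = δ := by ring
    rw [this]
    exact hCδ
  -- the key window estimate
  obtain ⟨ρ', δ, c, hρ'pos, hδpos, hcpos, hwin⟩ :
      ∃ ρ' δ c : ℝ, 0 < ρ' ∧ 0 < δ ∧ 0 < c ∧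
        ∀ τ0, τ0 + δ ≤ 0 → ‖u τ0 - x‖ ≤ ρ' →
          ∀ τ ∈ Icc (τ0 + δ/2) (τ0 + δ), c ≤ qq Sp Sm τ := by
    have hqhat : ContinuousAt (fun p : ℝ × ℝ × ℝ × ℝ × ℝ =>
        2*(p.2.2.2.1^2 + p.2.2.2.2^2)) x := by fun_prop
    rw [Metric.continuousAt_iff] at hqhat
    rcases lt_or_eq_of_le (by positivity : (0:ℝ) ≤ s1^2 + s2^2) with hQpos | hQ0
    · -- Case A : q(x) > 0
      obtain ⟨ρ₁, hρ₁pos, hρ₁⟩ := hqhat (s1^2 + s2^2) hQpos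
      obtain ⟨ρ, hρdef⟩ : ∃ ρ : ℝ, ρ = min ρ₁ 2 / 2 := ⟨_, rfl⟩
      have hρpos : 0 < ρ := by rw [hρdef]; exact div_pos (lt_min hρ₁pos two_pos) two_pos
      have hρ1 : ρ ≤ 1 := by
        rw [hρdef]
        have := min_le_right ρ₁ 2
        linarith
      have hρρ₁ : ρ < ρ₁ := by
        rw [hρdef]
        have := min_le_left ρ₁ 2
        have := lt_min hρ₁pos two_pos
        linarith
      obtain ⟨δ, hδdef⟩ : ∃ δ : ℝ, δ = ρ/(4*C) := ⟨_, rfl⟩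
      have hδpos : 0 < δ := by rw [hδdef]; positivity
      have hCδ : C * δ ≤ ρ/4 := by
        rw [hδdef]
        have hCne : C ≠ 0 := by linarith
        exact le_of_eq (by field_simp)
      refine ⟨ρ/2, δ, s1^2 + s2^2, by positivity, hδpos, hQpos, ?_⟩
      intro τ0 hτ0 hstart
      have hall := hstay' ρ δ hρpos hρ1 hδpos hCδ τ0 hτ0 hstart
      intro τ hτ
      have hτ' : τ ∈ Icc τ0 (τ0 + δ) := ⟨by have := hτ.1; linarith, hτ.2⟩
      have hd := hρ₁ (show dist (u τ) x < ρ₁ by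
        rw [dist_eq_norm]; exact lt_of_le_of_lt (hall τ hτ') hρρ₁)
      rw [Real.dist_eq] at hd
      simp only [hudef, hxdef] at hd
      have := abs_lt.mp hd
      unfold qq
      linarith [this.1]
    · -- Case B : q(x) = 0
      have hs1 : s1 = 0 := by nlinarith [sq_nonneg s1, sq_nonneg s2]
      have hs2 : s2 = 0 := by nlinarith [sq_nonneg s1, sq_nonneg s2]
      have hcx' : (3/4)*(n1^2+n2^2+n3^2 - 2*(n1*n2+n2*n3+n3*n1)) = 1 := by
        rw [hs1, hs2] at hcx; nlinarith
      have hAne : ¬((n2-n3)^2 - n1*(2*n1-n2-n3) = 0 ∧ (n3-n2)*(n1-n2-n3) = 0) := by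
        rintro ⟨ha1, ha2⟩; exact wh_alg hcx' ha1 ha2
      obtain ⟨ρ₁, hρ₁pos, hρ₁⟩ := hqhat 1 one_pos
      have hqx0 : 2*(s1^2 + s2^2) = 0 := by rw [hs1, hs2]; ring
      rcases not_and_or.mp hAne with hA1 | hA2
      · -- curvature S₊ nonzero at x
        obtain ⟨Sx, hSxdef⟩ : ∃ Sx : ℝ, Sx = 1/2*((n2-n3)^2 - n1*(2*n1-n2-n3)) := ⟨_, rfl⟩
        have hSx : Sx ≠ 0 := by
          rw [hSxdef]; exact mul_ne_zero (by norm_num) hA1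
        have hgc : ContinuousAt (fun p : ℝ × ℝ × ℝ × ℝ × ℝ =>
            1/2*((p.2.1 - p.2.2.1)^2 - p.1*(2*p.1 - p.2.1 - p.2.2.1))) x := by fun_prop
        rw [Metric.continuousAt_iff] at hgc
        obtain ⟨ρ₂, hρ₂pos, hρ₂⟩ := hgc (|Sx|/2) (by positivity)
        obtain ⟨ρ, hρdef⟩ : ∃ ρ : ℝ, ρ = min (min ρ₁ ρ₂) 2 / 2 := ⟨_, rfl⟩
        have hρpos : 0 < ρ := by
          rw [hρdef]; exact div_pos (lt_min (lt_min hρ₁pos hρ₂pos) two_pos) two_pos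
        have hρ1 : ρ ≤ 1 := by
          rw [hρdef]; have := min_le_right (min ρ₁ ρ₂) 2; linarith
        have hρρ₁ : ρ < ρ₁ := by
          rw [hρdef]
          have h1 := (min_le_left (min ρ₁ ρ₂) 2).trans (min_le_left ρ₁ ρ₂)
          have := lt_min (lt_min hρ₁pos hρ₂pos) two_pos
          linarith
        have hρρ₂ : ρ < ρ₂ := by
          rw [hρdef]
          have h1 := (min_le_left (min ρ₁ ρ₂) 2).trans (min_le_right ρ₁ ρ₂)
          have := lt_min (lt_min hρ₁pos hρ₂pos) two_pos
          linarith
        obtain ⟨δ, hδdef⟩ : ∃ δ : ℝ, δ = ρ/(4*C) := ⟨_, rfl⟩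
        have hδpos : 0 < δ := by rw [hδdef]; positivity
        have hCδ : C * δ ≤ ρ/4 := by
          rw [hδdef]
          have hCne : C ≠ 0 := by linarith
          exact le_of_eq (by field_simp)
        have hδhalf : δ ≤ 1/2 := by
          rw [hδdef, div_le_iff₀ (by linarith : (0:ℝ) < 4*C)]
          nlinarith
        have hm : 0 < 3/2 * |Sx| := by
          have := abs_pos.mpr hSx; linarith
        refine ⟨min (ρ/2) (3/2 * |Sx| * δ/16), δ, 2*((3/2) * |Sx| * δ/16)^2,
          lt_min (by positivity) (by positivity), hδpos, by positivity, ?_⟩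
        intro τ0 hτ0 hstart
        have hall := hstay' ρ δ hρpos hρ1 hδpos hCδ τ0 hτ0
          (hstart.trans (min_le_left _ _))
        have hq1' : ∀ τ ∈ Icc τ0 (τ0 + δ), qq Sp Sm τ ≤ 1 := by
          intro τ hτ
          have hd := hρ₁ (show dist (u τ) x < ρ₁ by
            rw [dist_eq_norm]; exact lt_of_le_of_lt (hall τ hτ) hρρ₁)
          rw [Real.dist_eq] at hd
          simp only [hudef, hxdef] at hd
          rw [hqx0, sub_zero] at hd
          have := abs_lt.mp hd
          unfold qq
          linarith [this.2]
        have hG' : ∀ τ ∈ Icc τ0 (τ0 + δ), |Spl N1 N2 N3 τ - Sx| ≤ |Sx|/2 := by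
          intro τ hτ
          have hd := hρ₂ (show dist (u τ) x < ρ₂ by
            rw [dist_eq_norm]; exact lt_of_le_of_lt (hall τ hτ) hρρ₂)
          rw [Real.dist_eq] at hd
          simp only [hudef, hxdef] at hd
          rw [← hSxdef] at hd
          refine le_of_lt ?_
          unfold Spl
          exact hd
        have derivSp : ∀ τ ∈ Icc τ0 (τ0 + δ), HasDerivAt Sp
            (-(2 - qq Sp Sm τ) * Sp τ - 3 * Spl N1 N2 N3 τ) τ :=
          fun τ hτ => (hsol τ (hτ.2.trans hτ0)).2.2.2.1
        have hqW' : ∀ τ ∈ Icc τ0 (τ0 + δ), 2 * Sp τ^2 ≤ qq Sp Sm τ := by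
          intro τ _; unfold qq; nlinarith [sq_nonneg (Sm τ)]
        have hVa : |Sp τ0| ≤ 3/2 * |Sx| * δ/16 := by
          obtain ⟨_, _, _, e4, _⟩ := wh_comp_le (u τ0) x
          have e4' := e4.trans (hstart.trans (min_le_right _ _))
          simp only [hudef, hxdef] at e4'
          rw [hs1, sub_zero] at e4'
          exact e4'
        exact wh_caseB' hSx hδpos hδhalf derivSp hq1' hG' hqW' hVa
      · -- curvature S₋ nonzero at x
        have hs3pos : (0:ℝ) < Real.sqrt 3 := Real.sqrt_pos.mpr (by norm_num)
        obtain ⟨Sx, hSxdef⟩ : ∃ Sx : ℝ,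
            Sx = Real.sqrt 3/2*((n3-n2)*(n1-n2-n3)) := ⟨_, rfl⟩
        have hSx : Sx ≠ 0 := by
          rw [hSxdef]
          exact mul_ne_zero (by positivity) hA2
        have hgc : ContinuousAt (fun p : ℝ × ℝ × ℝ × ℝ × ℝ =>
            Real.sqrt 3/2*((p.2.2.1 - p.2.1)*(p.1 - p.2.1 - p.2.2.1))) x := by fun_prop
        rw [Metric.continuousAt_iff] at hgc
        obtain ⟨ρ₂, hρ₂pos, hρ₂⟩ := hgc (|Sx|/2) (by positivity)
        obtain ⟨ρ, hρdef⟩ : ∃ ρ : ℝ, ρ = min (min ρ₁ ρ₂) 2 / 2 := ⟨_, rfl⟩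
        have hρpos : 0 < ρ := by
          rw [hρdef]; exact div_pos (lt_min (lt_min hρ₁pos hρ₂pos) two_pos) two_pos
        have hρ1 : ρ ≤ 1 := by
          rw [hρdef]; have := min_le_right (min ρ₁ ρ₂) 2; linarith
        have hρρ₁ : ρ < ρ₁ := by
          rw [hρdef]
          have h1 := (min_le_left (min ρ₁ ρ₂) 2).trans (min_le_left ρ₁ ρ₂)
          have := lt_min (lt_min hρ₁pos hρ₂pos) two_pos
          linarith
        have hρρ₂ : ρ < ρ₂ := by
          rw [hρdef]
          have h1 := (min_le_left (min ρ₁ ρ₂) 2).trans (min_le_right ρ₁ ρ₂)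
          have := lt_min (lt_min hρ₁pos hρ₂pos) two_pos
          linarith
        obtain ⟨δ, hδdef⟩ : ∃ δ : ℝ, δ = ρ/(4*C) := ⟨_, rfl⟩
        have hδpos : 0 < δ := by rw [hδdef]; positivity
        have hCδ : C * δ ≤ ρ/4 := by
          rw [hδdef]
          have hCne : C ≠ 0 := by linarith
          exact le_of_eq (by field_simp)
        have hδhalf : δ ≤ 1/2 := by
          rw [hδdef, div_le_iff₀ (by linarith : (0:ℝ) < 4*C)]
          nlinarith
        have hm : 0 < 3/2 * |Sx| := by
          have := abs_pos.mpr hSx; linarith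
        refine ⟨min (ρ/2) (3/2 * |Sx| * δ/16), δ, 2*((3/2) * |Sx| * δ/16)^2,
          lt_min (by positivity) (by positivity), hδpos, by positivity, ?_⟩
        intro τ0 hτ0 hstart
        have hall := hstay' ρ δ hρpos hρ1 hδpos hCδ τ0 hτ0
          (hstart.trans (min_le_left _ _))
        have hq1' : ∀ τ ∈ Icc τ0 (τ0 + δ), qq Sp Sm τ ≤ 1 := by
          intro τ hτ
          have hd := hρ₁ (show dist (u τ) x < ρ₁ by
            rw [dist_eq_norm]; exact lt_of_le_of_lt (hall τ hτ) hρρ₁)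
          rw [Real.dist_eq] at hd
          simp only [hudef, hxdef] at hd
          rw [hqx0, sub_zero] at hd
          have := abs_lt.mp hd
          unfold qq
          linarith [this.2]
        have hG' : ∀ τ ∈ Icc τ0 (τ0 + δ), |Smi N1 N2 N3 τ - Sx| ≤ |Sx|/2 := by
          intro τ hτ
          have hd := hρ₂ (show dist (u τ) x < ρ₂ by
            rw [dist_eq_norm]; exact lt_of_le_of_lt (hall τ hτ) hρρ₂)
          rw [Real.dist_eq] at hd
          simp only [hudef, hxdef] at hd
          rw [← hSxdef] at hd
          refine le_of_lt ?_
          unfold Smi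
          exact hd
        have derivSm : ∀ τ ∈ Icc τ0 (τ0 + δ), HasDerivAt Sm
            (-(2 - qq Sp Sm τ) * Sm τ - 3 * Smi N1 N2 N3 τ) τ :=
          fun τ hτ => (hsol τ (hτ.2.trans hτ0)).2.2.2.2.1
        have hqW' : ∀ τ ∈ Icc τ0 (τ0 + δ), 2 * Sm τ^2 ≤ qq Sp Sm τ := by
          intro τ _; unfold qq; nlinarith [sq_nonneg (Sp τ)]
        have hVa : |Sm τ0| ≤ 3/2 * |Sx| * δ/16 := by
          obtain ⟨_, _, _, _, e5⟩ := wh_comp_le (u τ0) x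
          have e5' := e5.trans (hstart.trans (min_le_right _ _))
          simp only [hudef, hxdef] at e5'
          rw [hs2, sub_zero] at e5'
          exact e5'
        exact wh_caseB' hSx hδpos hδhalf derivSm hq1' hG' hqW' hVa
  -- final contradiction via the monotone quantity
  have hG : ∀ b : ℝ, ∃ τ0, τ0 ≤ b ∧ ‖u τ0 - x‖ ≤ ρ' := by
    intro b
    have h1 : ∀ᶠ k in atTop, t k ≤ b := htb.eventually_le_atBot b
    obtain ⟨K, hK⟩ := Metric.tendsto_atTop.mp htc' ρ' hρ'pos
    obtain ⟨k, hk1, hk2⟩ := (h1.and (eventually_ge_atTop K)).exists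
    refine ⟨t k, hk1, ?_⟩
    have := hK k hk2
    rw [dist_eq_norm] at this
    exact this.le
  exact wh_assembly (fun τ0 => ‖u τ0 - x‖ ≤ ρ') (fun τ _ => hq0 τ) hhd hhpos hLpos hLle
    hδpos hcpos hG hwin
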